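/- Let α ≥ 0. For x ∈ ℝ≥0 define the evaluation functional δ_x(φ) = φ(x) on the weighted Sobolev space W^{1,α}₀(ℝ₊). Then δ_x is a continuous linear functional, and there is a constant C₁ (independent of x) such that ‖δ_x‖_{W^{-1,α}₀} ≤ C₁ (1 + x^α). -/

import Mathlib

open MeasureTheory

/-- The weighted Sobolev norm `‖φ‖_{k,α}` on `ℝ₊`. -/
noncomputable def sobNorm (k : ℕ) (α : ℝ) (φ : ℝ → ℝ) : ℝ :=
  Real.sqrt (∑ j ∈ Finset.range (k + 1),
    ∫ x in Set.Ioi (0:ℝ), (iteratedDeriv j φ x) ^ 2 / (1 + x ^ (2 * α)))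

/-- The evaluation functional `δ_x : φ ↦ φ(x)` is continuous on `W^{1,α}₀(ℝ₊)`,
with dual norm bounded by `C₁ (1 + x^α)` uniformly in `x ≥ 0`. -/
theorem evaluation_functional_bound (α : ℝ) (hα : 0 ≤ α) :
    ∃ C₁ : ℝ, 0 < C₁ ∧ ∀ x : ℝ, 0 ≤ x → ∀ φ : ℝ → ℝ,
      ContDiff ℝ (⊤ : ℕ∞) φ → HasCompactSupport φ →
      |φ x| ≤ C₁ * (1 + x ^ α) * sobNorm 1 α φ := by
  set C' : ℝ := 1 + (2 ^ α) ^ 2 with hC'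
  have hC'pos : 0 < C' := by positivity
  refine ⟨Real.sqrt (2 * C'), Real.sqrt_pos.2 (by positivity), ?_⟩
  intro x hx φ hφ hsupp
  set w : ℝ → ℝ := fun t => 1 + t ^ (2 * α) with hwdef
  have hw1 : ∀ t : ℝ, 0 ≤ t → 1 ≤ w t := fun t ht =>
    le_add_of_nonneg_right (Real.rpow_nonneg ht _)
  have hwc : Continuous w := continuous_const.add
    (continuous_iff_continuousAt.2 fun t =>
      Real.continuousAt_rpow_const t _ (Or.inr (by positivity)))
  have hφd : Differentiable ℝ φ := hφ.differentiable (by norm_num)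
  have hc : Continuous φ := hφd.continuous
  set D : ℝ → ℝ := deriv φ with hDdef
  have hc' : Continuous D := ((contDiff_infty_iff_deriv.1 hφ).2).continuous
  have hsupp' : HasCompactSupport D := hsupp.deriv
  -- integrability on (0,∞) of weighted squares
  have key : ∀ ψ : ℝ → ℝ, Continuous ψ → HasCompactSupport ψ →
      IntegrableOn (fun t => ψ t ^ 2 / w t) (Set.Ioi 0) volume := by
    intro ψ hψc hψs
    have hψs2 : HasCompactSupport (fun t => ψ t ^ 2) := by
      exact hψs.comp_left (g := fun y : ℝ => y ^ 2) (by norm_num)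
    have hint : Integrable (fun t => ψ t ^ 2) (volume.restrict (Set.Ioi (0:ℝ))) :=
      ((hψc.pow 2).integrable_of_hasCompactSupport hψs2).restrict
    refine Integrable.mono' hint
      (ContinuousOn.aestronglyMeasurable
        (((hψc.pow 2).continuousOn).div hwc.continuousOn
          (fun t ht => ne_of_gt (lt_of_lt_of_le one_pos (hw1 t (le_of_lt ht)))))
        measurableSet_Ioi) ?_
    filter_upwards [ae_restrict_mem measurableSet_Ioi] with t ht
    have h1 : (1:ℝ) ≤ w t := hw1 t (le_of_lt ht)
    have h0 : (0:ℝ) < w t := lt_of_lt_of_le one_pos h1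
    have : |ψ t ^ 2 / w t| = ψ t ^ 2 / w t :=
      abs_of_nonneg (div_nonneg (sq_nonneg _) h0.le)
    calc ‖ψ t ^ 2 / w t‖ = ψ t ^ 2 / w t := this
      _ ≤ ψ t ^ 2 := div_le_self (sq_nonneg _) h1
  have I1 := key φ hc hsupp
  have I2 := key D hc' hsupp'
  set S1 : ℝ := ∫ t in Set.Ioi (0:ℝ), φ t ^ 2 / w t with hS1def
  set S2 : ℝ := ∫ t in Set.Ioi (0:ℝ), D t ^ 2 / w t with hS2def
  have hS1 : 0 ≤ S1 := setIntegral_nonneg measurableSet_Ioi fun t ht =>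
    div_nonneg (sq_nonneg _) (le_trans one_pos.le (hw1 t ht.le))
  have hS2 : 0 ≤ S2 := setIntegral_nonneg measurableSet_Ioi fun t ht =>
    div_nonneg (sq_nonneg _) (le_trans one_pos.le (hw1 t ht.le))
  have hxb : x ≤ x + 1 := by linarith
  have hwpos_on : ∀ t ∈ Set.Icc x (x+1), 0 < w t := fun t ht =>
    lt_of_lt_of_le one_pos (hw1 t (le_trans hx ht.1))
  have hcont2 : Continuous fun t => 2 * φ t * D t :=
    (continuous_const.mul hc).mul hc'
  set A : ℝ := ∫ t in x..(x+1), |2 * φ t * D t| with hAdef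
  -- FTC
  have ftc : ∀ y : ℝ, ∫ t in x..y, 2 * φ t * D t = φ y ^ 2 - φ x ^ 2 := by
    intro y
    exact intervalIntegral.integral_eq_sub_of_hasDerivAt (f := fun t => φ t ^ 2)
      (fun t _ => by simpa [Pi.pow_def] using ((hφd t).hasDerivAt.pow 2))
      (hcont2.intervalIntegrable _ _)
  -- Step 1 : pointwise bound via FTC
  have step1 : ∀ y ∈ Set.Icc x (x+1), φ x ^ 2 ≤ φ y ^ 2 + A := by
    intro y hy
    have hAb : |∫ t in x..y, 2 * φ t * D t| ≤ A := by
      calc |∫ t in x..y, 2 * φ t * D t|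
          ≤ ∫ t in x..y, |2 * φ t * D t| :=
            intervalIntegral.abs_integral_le_integral_abs hy.1
        _ ≤ A := intervalIntegral.integral_mono_interval le_rfl hy.1 hy.2
            (Filter.Eventually.of_forall fun t => abs_nonneg _)
            (hcont2.abs.intervalIntegrable _ _)
    have := ftc y
    have h2 := neg_abs_le (∫ t in x..y, 2 * φ t * D t)
    linarith
  -- Step 2 : average over [x, x+1]
  have step2 : φ x ^ 2 ≤ (∫ y in x..(x+1), φ y ^ 2) + A := by
    have h0 : φ x ^ 2 = ∫ _ in x..(x+1), φ x ^ 2 := by simp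
    have hmono := intervalIntegral.integral_mono_on (μ := volume) hxb
      (intervalIntegrable_const)
      (((hc.pow 2).intervalIntegrable _ _).add intervalIntegrable_const) step1
    rw [intervalIntegral.integral_add ((hc.pow 2).intervalIntegrable _ _)
      intervalIntegrable_const] at hmono
    simpa using hmono
  -- Step 3 : |2 φ φ'| ≤ φ² + φ'²
  have step3 : A ≤ ∫ t in x..(x+1), (φ t ^ 2 + D t ^ 2) := by
    refine intervalIntegral.integral_mono_on hxb (hcont2.abs.intervalIntegrable _ _)
      (((hc.pow 2).add (hc'.pow 2)).intervalIntegrable _ _) fun t _ => ?_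
    have h1 : |2 * φ t * D t| = 2 * |φ t| * |D t| := by
      rw [abs_mul, abs_mul, abs_two]
    calc |2 * φ t * D t| = 2 * |φ t| * |D t| := h1
      _ ≤ |φ t| ^ 2 + |D t| ^ 2 := two_mul_le_add_sq _ _
      _ = φ t ^ 2 + D t ^ 2 := by rw [sq_abs, sq_abs]
  -- weighted comparison on the interval
  set M : ℝ := 1 + (x+1) ^ (2*α) with hMdef
  set g : ℝ → ℝ := fun t => (φ t ^ 2 + D t ^ 2) / w t with hgdef
  have hgcont : ContinuousOn g (Set.uIcc x (x+1)) := by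
    rw [Set.uIcc_of_le hxb]
    exact (((hc.pow 2).add (hc'.pow 2)).continuousOn).div hwc.continuousOn
      (fun t ht => ne_of_gt (hwpos_on t ht))
  have step5 : (∫ t in x..(x+1), (φ t ^ 2 + D t ^ 2)) ≤ M * ∫ t in x..(x+1), g t := by
    rw [← intervalIntegral.integral_const_mul]
    refine intervalIntegral.integral_mono_on hxb
      ((((hc.pow 2).add (hc'.pow 2)).intervalIntegrable _ _))
      ((hgcont.intervalIntegrable).const_mul M) fun t ht => ?_
    have hwt : 0 < w t := hwpos_on t ht
    have hwle : w t ≤ M := by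
      have : t ^ (2*α) ≤ (x+1) ^ (2*α) :=
        Real.rpow_le_rpow (le_trans hx ht.1) ht.2 (by positivity)
      simpa [hwdef, hMdef] using add_le_add_left this 1
    calc φ t ^ 2 + D t ^ 2 = ((φ t ^ 2 + D t ^ 2) / w t) * w t := by
          field_simp
      _ ≤ ((φ t ^ 2 + D t ^ 2) / w t) * M :=
          mul_le_mul_of_nonneg_left hwle (div_nonneg (by positivity) hwt.le)
      _ = M * g t := by rw [hgdef]; ring
  -- comparison with the integral over (0,∞)
  have hgsplit : g = fun t => φ t ^ 2 / w t + D t ^ 2 / w t := by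
    funext t; rw [hgdef]; ring
  have Isum : IntegrableOn g (Set.Ioi (0:ℝ)) volume := by
    rw [hgsplit]; exact I1.add I2
  have step6 : (∫ t in x..(x+1), g t) ≤ S1 + S2 := by
    rw [intervalIntegral.integral_of_le hxb]
    have hsub : Set.Ioc x (x+1) ⊆ Set.Ioi (0:ℝ) := fun t ht => lt_of_le_of_lt hx ht.1
    have h1 : (∫ t in Set.Ioc x (x+1), g t) ≤ ∫ t in Set.Ioi (0:ℝ), g t := by
      refine setIntegral_mono_set Isum ?_ (HasSubset.Subset.eventuallyLE hsub)
      filter_upwards [ae_restrict_mem measurableSet_Ioi] with t ht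
      exact div_nonneg (by positivity) (le_trans one_pos.le (hw1 t ht.le))
    have h2 : (∫ t in Set.Ioi (0:ℝ), g t) = S1 + S2 := by
      rw [hgsplit]; exact integral_add I1 I2
    linarith
  -- the constant bound
  have step7 : M ≤ C' * (1 + x ^ α) ^ 2 := by
    have h1x : (1:ℝ) ≤ 1 + x ^ α := le_add_of_nonneg_right (Real.rpow_nonneg hx α)
    have h2pow : (0:ℝ) ≤ 2 ^ α := Real.rpow_nonneg (by norm_num) α
    have hxa : (0:ℝ) ≤ x ^ α := Real.rpow_nonneg hx α
    have h2 : (x+1) ^ α ≤ 2 ^ α * (1 + x ^ α) := by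
      rcases le_total x 1 with h | h
      · have hle : (x+1) ^ α ≤ 2 ^ α :=
          Real.rpow_le_rpow (by linarith) (by linarith) hα
        nlinarith
      · have hle : (x+1) ^ α ≤ (2*x) ^ α :=
          Real.rpow_le_rpow (by linarith) (by linarith) hα
        rw [Real.mul_rpow (by norm_num) hx] at hle
        nlinarith
    have hsqeq : (x+1) ^ (2*α) = ((x+1) ^ α) ^ 2 := by
      rw [← Real.rpow_natCast ((x+1) ^ α) 2, ← Real.rpow_mul (by linarith)]
      norm_num [mul_comm]
    have hxn : (0:ℝ) ≤ (x+1) ^ α := Real.rpow_nonneg (by linarith) α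
    have hsq2 : ((x+1) ^ α) ^ 2 ≤ (2 ^ α * (1 + x ^ α)) ^ 2 :=
      pow_le_pow_left₀ hxn h2 2
    rw [hMdef, hsqeq, hC']
    nlinarith
  -- assemble the quadratic bound
  have hMnn : (0:ℝ) ≤ M := by
    have := Real.rpow_nonneg (show (0:ℝ) ≤ x+1 by linarith) (2*α)
    rw [hMdef]; linarith
  have hintphi : (∫ t in x..(x+1), φ t ^ 2) ≤ ∫ t in x..(x+1), (φ t ^ 2 + D t ^ 2) := by
    refine intervalIntegral.integral_mono_on hxb ((hc.pow 2).intervalIntegrable _ _)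
      (((hc.pow 2).add (hc'.pow 2)).intervalIntegrable _ _) fun t _ => ?_
    nlinarith [sq_nonneg (D t)]
  have hMstep : M * (∫ t in x..(x+1), g t) ≤ C' * (1 + x ^ α) ^ 2 * (S1 + S2) := by
    have hgnn : (0:ℝ) ≤ ∫ t in x..(x+1), g t :=
      intervalIntegral.integral_nonneg hxb fun t ht =>
        div_nonneg (by positivity) (hwpos_on t ht).le
    calc M * (∫ t in x..(x+1), g t) ≤ M * (S1 + S2) :=
          mul_le_mul_of_nonneg_left step6 hMnn
      _ ≤ C' * (1 + x ^ α) ^ 2 * (S1 + S2) :=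
          mul_le_mul_of_nonneg_right step7 (by linarith)
  have hfinal : φ x ^ 2 ≤ 2 * C' * (1 + x ^ α) ^ 2 * (S1 + S2) := by
    have h4 : φ x ^ 2 ≤ 2 * ∫ t in x..(x+1), (φ t ^ 2 + D t ^ 2) := by linarith
    nlinarith [hMstep, step5]
  -- take square roots
  have h1x : (0:ℝ) ≤ 1 + x ^ α := by
    have := Real.rpow_nonneg hx α; linarith
  have hsob : sobNorm 1 α φ = Real.sqrt (S1 + S2) := by
    rw [sobNorm, Finset.sum_range_succ, Finset.sum_range_one,
      iteratedDeriv_zero, iteratedDeriv_one]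
  calc |φ x| = Real.sqrt (φ x ^ 2) := (Real.sqrt_sq_eq_abs _).symm
    _ ≤ Real.sqrt (2 * C' * (1 + x ^ α) ^ 2 * (S1 + S2)) := Real.sqrt_le_sqrt hfinal
    _ = Real.sqrt (2 * C') * (1 + x ^ α) * Real.sqrt (S1 + S2) := by
        have h2C : (0:ℝ) ≤ 2 * C' := by linarith
        rw [Real.sqrt_mul (mul_nonneg h2C (sq_nonneg (1 + x ^ α))),
          Real.sqrt_mul h2C, Real.sqrt_sq h1x]
    _ = Real.sqrt (2 * C') * (1 + x ^ α) * sobNorm 1 α φ := by rw [hsob]
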